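/- (Scaled bound on the bootstrap fixed point.) For every integer θ ≥ 2 there exists γ₀ > 0 such that for every γ ∈ (0,γ₀) there exists b̄ with the following property: for every integer b ≥ b̄, setting p = γ·b^{−θ/(θ−1)}, the quantity p_∞^+ := inf{x ∈ (0,1] : x = p + (1−p)·Bin(b,x,θ)} satisfies p_∞^+ ≤ γ̄(γ)·b^{−θ/(θ−1)}, where γ̄(γ) = inf{x > 0 : x = γ + 2x^θ/θ!}. -/

import Mathlib

/-- Bin(κ,x,θ) = ∑_{i=θ}^{κ} (κ choose i) x^i (1−x)^{κ−i}. -/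
noncomputable def binTail (κ : ℕ) (x : ℝ) (θ : ℕ) : ℝ :=
  ∑ i ∈ Finset.Icc θ κ, (κ.choose i : ℝ) * x ^ i * (1 - x) ^ (κ - i)

/-- γ̄(γ) = inf{x > 0 : x = γ + 2x^θ/θ!}. -/
noncomputable def gammaBar (θ : ℕ) (γ : ℝ) : ℝ :=
  sInf {x : ℝ | 0 < x ∧ x = γ + 2 * x ^ θ / (θ.factorial : ℝ)}

lemma binTail_le (b θ : ℕ) (hθ : 1 ≤ θ) (x : ℝ) (hx : 0 ≤ x)
    (hbx : (b:ℝ) * x ≤ 1/2) :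
    binTail b x θ ≤ 2 * ((b:ℝ)*x)^θ / (θ.factorial : ℝ) := by
  have hbx0 : 0 ≤ (b:ℝ) * x := by positivity
  rcases Nat.eq_zero_or_pos b with hb | hb
  · subst hb
    rw [binTail, Finset.Icc_eq_empty (by omega)]
    simp
    positivity
  have hx1 : x ≤ 1 := by
    have hb1 : (1:ℝ) ≤ (b:ℝ) := by exact_mod_cast hb
    nlinarith
  have step1 : binTail b x θ ≤ ∑ i ∈ Finset.Icc θ b,
      ((b:ℝ)*x)^θ / (θ.factorial : ℝ) * (1/2)^(i-θ) := by
    apply Finset.sum_le_sum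
    intro i hi
    simp only [Finset.mem_Icc] at hi
    have h1 : (b.choose i : ℝ) * x ^ i * (1 - x) ^ (b - i) ≤ ((b:ℝ)*x)^i / (i.factorial : ℝ) := by
      have hc : (b.choose i : ℝ) ≤ (b:ℝ)^i / (i.factorial : ℝ) := by
        exact_mod_cast Nat.choose_le_pow_div (α := ℝ) i b
      have h1x : (1 - x) ^ (b - i) ≤ 1 :=
        pow_le_one₀ (by linarith) (by linarith)
      have hxi : (0:ℝ) ≤ x ^ i := by positivity
      calc (b.choose i : ℝ) * x ^ i * (1 - x) ^ (b - i)
          ≤ (b.choose i : ℝ) * x ^ i * 1 := by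
            apply mul_le_mul_of_nonneg_left h1x (by positivity)
        _ ≤ ((b:ℝ)^i / (i.factorial : ℝ)) * x ^ i := by
            rw [mul_one]; exact mul_le_mul_of_nonneg_right hc hxi
        _ = ((b:ℝ)*x)^i / (i.factorial : ℝ) := by rw [mul_pow]; ring
    refine h1.trans ?_
    have hfact : (θ.factorial : ℝ) ≤ (i.factorial : ℝ) := by
      exact_mod_cast Nat.factorial_le hi.1
    have hθf : (0:ℝ) < (θ.factorial : ℝ) := by positivity
    have hif : (0:ℝ) < (i.factorial : ℝ) := by positivity
    have hpow : ((b:ℝ)*x)^i ≤ ((b:ℝ)*x)^θ * (1/2)^(i-θ) := by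
      have : ((b:ℝ)*x)^i = ((b:ℝ)*x)^θ * ((b:ℝ)*x)^(i-θ) := by
        rw [← pow_add]; congr 1; omega
      rw [this]
      exact mul_le_mul_of_nonneg_left
        (pow_le_pow_left₀ hbx0 hbx _) (by positivity)
    calc ((b:ℝ)*x)^i / (i.factorial : ℝ) ≤ ((b:ℝ)*x)^i / (θ.factorial : ℝ) := by
          apply div_le_div_of_nonneg_left ?_ hθf hfact
          positivity
      _ ≤ ((b:ℝ)*x)^θ * (1/2)^(i-θ) / (θ.factorial : ℝ) := by
          gcongr
      _ = ((b:ℝ)*x)^θ / (θ.factorial : ℝ) * (1/2)^(i-θ) := by ring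
  refine step1.trans ?_
  rcases le_or_gt θ b with hθb | hθb
  · rw [show Finset.Icc θ b = Finset.Ico θ (b+1) by rw [Finset.Ico_add_one_right_eq_Icc], Finset.sum_Ico_eq_sum_range]
    have : ∀ j ∈ Finset.range (b + 1 - θ),
        ((b:ℝ)*x)^θ / (θ.factorial : ℝ) * (1/2)^(θ + j - θ)
        = ((b:ℝ)*x)^θ / (θ.factorial : ℝ) * (1/2)^j := by
      intro j _; congr 2; omega
    rw [Finset.sum_congr rfl this, ← Finset.mul_sum]
    have hgeom : ∑ j ∈ Finset.range (b + 1 - θ), ((1:ℝ)/2)^j ≤ 2 := by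
      have := geom_sum_eq (by norm_num : ((1:ℝ)/2) ≠ 1) (b + 1 - θ)
      rw [this]
      have : (0:ℝ) ≤ ((1:ℝ)/2)^(b+1-θ) := by positivity
      rw [div_le_iff_of_neg (by norm_num : ((1:ℝ)/2 - 1) < 0)]
      linarith
    calc ((b:ℝ)*x)^θ / (θ.factorial : ℝ) * ∑ j ∈ Finset.range (b + 1 - θ), ((1:ℝ)/2)^j
        ≤ ((b:ℝ)*x)^θ / (θ.factorial : ℝ) * 2 :=
          mul_le_mul_of_nonneg_left hgeom (by positivity)
      _ = 2 * ((b:ℝ)*x)^θ / (θ.factorial : ℝ) := by ring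
  · rw [Finset.Icc_eq_empty (by omega)]
    simp
    positivity

lemma gammaBar_spec (θ : ℕ) (hθ : 2 ≤ θ) (γ : ℝ) (hγ : 0 < γ) (hγ4 : γ < 1/4) :
    0 < gammaBar θ γ ∧ gammaBar θ γ ≤ 1/2 ∧
    gammaBar θ γ = γ + 2 * (gammaBar θ γ) ^ θ / (θ.factorial : ℝ) := by
  set T := {x : ℝ | 0 < x ∧ x = γ + 2 * x ^ θ / (θ.factorial : ℝ)} with hT
  have hfpos : (0:ℝ) < (θ.factorial : ℝ) := by positivity
  have hf2 : (2:ℝ) ≤ (θ.factorial : ℝ) := by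
    exact_mod_cast Nat.self_le_factorial θ |>.trans' (by exact_mod_cast hθ) |>.trans (le_refl _) |>.trans (le_refl _)
  -- find an element of T in (0, 1/2]
  have hcont : ContinuousOn (fun x : ℝ => γ + 2 * x ^ θ / (θ.factorial : ℝ) - x)
      (Set.Icc 0 (1/2)) := by fun_prop
  have hg0 : (0:ℝ) < γ + 2 * (0:ℝ) ^ θ / (θ.factorial : ℝ) - 0 := by
    rw [zero_pow (by omega)]; simpa using hγ
  have hgh : γ + 2 * ((1:ℝ)/2) ^ θ / (θ.factorial : ℝ) - 1/2 < 0 := by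
    have h1 : ((1:ℝ)/2) ^ θ ≤ (1/2)^2 :=
      pow_le_pow_of_le_one (by norm_num) (by norm_num) hθ
    have h2 : 2 * ((1:ℝ)/2) ^ θ / (θ.factorial : ℝ) ≤ 2 * ((1:ℝ)/2)^2 / 2 := by
      apply div_le_div₀ (by norm_num) (by nlinarith) (by norm_num) hf2
    nlinarith
  obtain ⟨s, hs, hgs⟩ := intermediate_value_Icc' (by norm_num : (0:ℝ) ≤ 1/2) hcont
    (Set.mem_Icc.mpr ⟨le_of_lt hgh, le_of_lt hg0⟩)
  have hseq : s = γ + 2 * s ^ θ / (θ.factorial : ℝ) := by linarith [hgs.ge, hgs.le]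
  have hspos : 0 < s := by
    rcases hs.1.eq_or_lt.imp Eq.symm id with h | h
    · exfalso
      rw [h, zero_pow (by omega : θ ≠ 0)] at hseq
      simp at hseq; linarith
    · exact h
  have hsT : s ∈ T := ⟨hspos, hseq⟩
  have hTne : T.Nonempty := ⟨s, hsT⟩
  have hTbdd : BddBelow T := ⟨γ, fun x hx => by
    have h0 : (0:ℝ) ≤ 2 * x ^ θ / (θ.factorial : ℝ) :=
      div_nonneg (by nlinarith [pow_pos hx.1 θ]) hfpos.le
    linarith [hx.2]⟩
  have hTeq : T = {x : ℝ | x = γ + 2 * x ^ θ / (θ.factorial : ℝ)} ∩ Set.Ici γ := by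
    ext x
    constructor
    · rintro ⟨hx1, hx2⟩
      refine ⟨hx2, ?_⟩
      have h0 : (0:ℝ) ≤ 2 * x ^ θ / (θ.factorial : ℝ) :=
        div_nonneg (by nlinarith [pow_pos hx1 θ]) hfpos.le
      simp only [Set.mem_Ici]; linarith
    · rintro ⟨hx1, hx2⟩
      exact ⟨lt_of_lt_of_le hγ hx2, hx1⟩
  have hclosed : IsClosed T := by
    rw [hTeq]
    exact (isClosed_eq continuous_id (by fun_prop)).inter isClosed_Ici
  have hmem : gammaBar θ γ ∈ T := hclosed.csInf_mem hTne hTbdd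
  refine ⟨hmem.1, ?_, hmem.2⟩
  exact (csInf_le hTbdd hsT).trans hs.2

lemma binTail_nonneg (b θ : ℕ) (x : ℝ) (hx : 0 ≤ x) (hx1 : x ≤ 1) :
    0 ≤ binTail b x θ := by
  apply Finset.sum_nonneg
  intro i _
  have : (0:ℝ) ≤ 1 - x := by linarith
  positivity

lemma binTail_zero (b θ : ℕ) (hθ : 1 ≤ θ) : binTail b (0:ℝ) θ = 0 := by
  apply Finset.sum_eq_zero
  intro i hi
  simp only [Finset.mem_Icc] at hi
  rw [zero_pow (by omega : i ≠ 0)]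
  ring

lemma binTail_continuous (b θ : ℕ) : Continuous (fun x : ℝ => binTail b x θ) := by
  unfold binTail
  apply continuous_finset_sum
  intro i _
  fun_prop

/-- Scaled bound on the bootstrap fixed point. -/
theorem stmt17 (θ : ℕ) (hθ : 2 ≤ θ) :
    ∃ γ₀ : ℝ, 0 < γ₀ ∧ ∀ γ ∈ Set.Ioo (0:ℝ) γ₀, ∃ bbar : ℕ,
      ∀ b : ℕ, bbar ≤ b →
        sInf {x ∈ Set.Ioc (0:ℝ) 1 |
            x = γ * (b : ℝ) ^ (-(θ : ℝ) / ((θ : ℝ) - 1))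
              + (1 - γ * (b : ℝ) ^ (-(θ : ℝ) / ((θ : ℝ) - 1))) * binTail b x θ}
          ≤ gammaBar θ γ * (b : ℝ) ^ (-(θ : ℝ) / ((θ : ℝ) - 1)) := by
  refine ⟨1/4, by norm_num, fun γ hγ => ⟨1, fun b hb => ?_⟩⟩
  obtain ⟨hγ0, hγ4⟩ := hγ
  obtain ⟨hgb0, hgb2, hgbeq⟩ := gammaBar_spec θ hθ γ hγ0 hγ4
  set gb := gammaBar θ γ with hgb
  have ht2 : (2:ℝ) ≤ (θ:ℝ) := by exact_mod_cast hθ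
  have ht1 : (θ:ℝ) - 1 ≠ 0 := by linarith
  have hb1 : (1:ℝ) ≤ (b:ℝ) := by exact_mod_cast hb
  have hbpos : (0:ℝ) < (b:ℝ) := by linarith
  set e : ℝ := -(θ : ℝ) / ((θ : ℝ) - 1) with he
  have hene : e ≤ 0 := by
    apply div_nonpos_of_nonpos_of_nonneg <;> linarith
  set β : ℝ := (b:ℝ) ^ e with hβ
  have hβpos : 0 < β := Real.rpow_pos_of_pos hbpos e
  have hβ1 : β ≤ 1 := Real.rpow_le_one_of_one_le_of_nonpos hb1 hene
  -- b * β ≤ 1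
  have hbβ : (b:ℝ) * β = (b:ℝ) ^ ((1:ℝ) + e) := by
    rw [Real.rpow_add hbpos, Real.rpow_one]
  have h1e : (1:ℝ) + e ≤ 0 := by
    rw [he]
    have : (1:ℝ) + -(θ:ℝ)/((θ:ℝ)-1) = -(1/((θ:ℝ)-1)) := by field_simp; ring
    rw [this]
    have : (0:ℝ) < 1/((θ:ℝ)-1) := one_div_pos.mpr (by linarith)
    linarith
  have hbβ1 : (b:ℝ) * β ≤ 1 := by
    rw [hbβ]; exact Real.rpow_le_one_of_one_le_of_nonpos hb1 h1e
  have hbβ0 : 0 ≤ (b:ℝ) * β := by positivity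
  -- key : ((b:ℝ) * β)^θ = β
  have hkey : ((b:ℝ) * β)^θ = β := by
    rw [hbβ, ← Real.rpow_natCast ((b:ℝ) ^ ((1:ℝ)+e)) θ, ← Real.rpow_mul hbpos.le]
    congr 1
    rw [he]
    field_simp
    ring
  set p : ℝ := γ * β with hp
  have hppos : 0 < p := by positivity
  have hple : p ≤ γ := by
    calc p = γ * β := rfl
    _ ≤ γ * 1 := by nlinarith
    _ = γ := mul_one γ
  set xs : ℝ := gb * β with hxs
  have hxspos : 0 < xs := by positivity
  have hxs1 : xs ≤ 1 := by nlinarith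
  have hbxs : (b:ℝ) * xs ≤ 1/2 := by
    have : (b:ℝ) * xs = gb * ((b:ℝ) * β) := by ring
    rw [this]
    nlinarith
  -- binTail bound at xs
  have hbt : binTail b xs θ ≤ 2 * gb^θ * β / (θ.factorial : ℝ) := by
    have h1 := binTail_le b θ (by omega) xs hxspos.le hbxs
    have h2 : ((b:ℝ) * xs)^θ = gb^θ * β := by
      have : (b:ℝ) * xs = gb * ((b:ℝ) * β) := by ring
      rw [this, mul_pow, hkey]
    rw [h2] at h1
    calc binTail b xs θ ≤ 2 * (gb^θ * β) / (θ.factorial : ℝ) := h1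
    _ = 2 * gb^θ * β / (θ.factorial : ℝ) := by ring
  -- the function
  set g : ℝ → ℝ := fun x => p + (1 - p) * binTail b x θ - x with hg
  have hg0 : g 0 = p := by
    simp only [hg, binTail_zero b θ (by omega)]
    ring
  have hbtnn : 0 ≤ binTail b xs θ := binTail_nonneg b θ xs hxspos.le hxs1
  have hgxs : g xs ≤ 0 := by
    have hfact : (0:ℝ) < (θ.factorial : ℝ) := by positivity
    have h3 : (1 - p) * binTail b xs θ ≤ binTail b xs θ := by nlinarith
    have h4 : p + binTail b xs θ ≤ xs := by
      have : γ * β + 2 * gb^θ * β / (θ.factorial : ℝ) = (γ + 2 * gb^θ / (θ.factorial : ℝ)) * β := by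
        ring
      calc p + binTail b xs θ ≤ γ * β + 2 * gb^θ * β / (θ.factorial : ℝ) := by
            exact add_le_add le_rfl hbt
      _ = (γ + 2 * gb^θ / (θ.factorial : ℝ)) * β := this
      _ = gb * β := by rw [← hgbeq]
      _ = xs := rfl
    simp only [hg]
    linarith
  -- IVT
  have hcont : ContinuousOn g (Set.Icc 0 xs) := by
    apply Continuous.continuousOn
    have := binTail_continuous b θ
    fun_prop
  obtain ⟨c, hc, hgc⟩ := intermediate_value_Icc' hxspos.le hcont
    (Set.mem_Icc.mpr ⟨hgxs, by rw [hg0]; exact hppos.le⟩)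
  have hcpos : 0 < c := by
    rcases hc.1.eq_or_lt.imp Eq.symm id with h | h
    · exfalso; rw [h, hg0] at hgc; exact hppos.ne' hgc
    · exact h
  have hceq : c = p + (1 - p) * binTail b c θ := by
    have : p + (1 - p) * binTail b c θ - c = 0 := hgc
    linarith
  have hcmem : c ∈ {x ∈ Set.Ioc (0:ℝ) 1 |
      x = γ * (b : ℝ) ^ (-(θ : ℝ) / ((θ : ℝ) - 1))
        + (1 - γ * (b : ℝ) ^ (-(θ : ℝ) / ((θ : ℝ) - 1))) * binTail b x θ} := by
    refine ⟨⟨hcpos, hc.2.trans hxs1⟩, ?_⟩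
    rw [← he, ← hβ, ← hp]
    exact hceq
  have hbdd : BddBelow {x ∈ Set.Ioc (0:ℝ) 1 |
      x = γ * (b : ℝ) ^ (-(θ : ℝ) / ((θ : ℝ) - 1))
        + (1 - γ * (b : ℝ) ^ (-(θ : ℝ) / ((θ : ℝ) - 1))) * binTail b x θ} :=
    ⟨0, fun x hx => hx.1.1.le⟩
  calc sInf _ ≤ c := csInf_le hbdd hcmem
  _ ≤ xs := hc.2
  _ = gb * (b : ℝ) ^ (-(θ : ℝ) / ((θ : ℝ) - 1)) := by rw [hxs, hβ, he]
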